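/- Let F : 2^U → 2^V be the map induced by a stable matching instance (G = (U,V;E), ≻), and let 𝓕 := { F(U') : U' ⊆ U }. Then 𝓕 is accessible: for every nonempty X ∈ 𝓕 there exists v ∈ X with X∖{v} ∈ 𝓕. -/

import Mathlib

open scoped Classical

/-- `M` is a matching with edges inside the edge set `E`:
no two distinct edges of `M` share a left or a right endpoint. -/
def IsMatching {U V : Type*} (E M : Finset (U × V)) : Prop :=
  M ⊆ E ∧ ∀ e₁ ∈ M, ∀ e₂ ∈ M, (e₁.1 = e₂.1 ∨ e₁.2 = e₂.2) → e₁ = e₂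

/-- The edge set of the subgraph `G[U' ∪ V]` induced by deleting
the left vertices outside `U'` (and their incident edges). -/
noncomputable def restrictL {U V : Type*} (E : Finset (U × V)) (U' : Finset U) : Finset (U × V) :=
  E.filter (fun e => e.1 ∈ U')

/-- `(u, v)` is a blocking pair against the matching `M`, with respect to the
edge set `E` and the preference profiles `succU` (for left vertices) and
`succV` (for right vertices):  `(u,v)` is an edge, `u` is unmatched or
prefers `v` to its partner, and `v` is unmatched or prefers `u` to its partner. -/
def IsBlocking {U V : Type*} (E : Finset (U × V)) (succU : U → V → V → Prop)
    (succV : V → U → U → Prop) (M : Finset (U × V)) (u : U) (v : V) : Prop :=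
  (u, v) ∈ E ∧
  ((∀ v', (u, v') ∉ M) ∨ (∃ v', (u, v') ∈ M ∧ succU u v v')) ∧
  ((∀ u', (u', v) ∉ M) ∨ (∃ u', (u', v) ∈ M ∧ succV v u u'))

/-- `M` is a stable matching of the instance with edge set `E` and
preferences `succU`, `succV`. -/
def IsStable {U V : Type*} (E : Finset (U × V)) (succU : U → V → V → Prop)
    (succV : V → U → U → Prop) (M : Finset (U × V)) : Prop :=
  IsMatching E M ∧ ∀ u v, ¬ IsBlocking E succU succV M u v

/-- The preferences form a stable matching instance on the bipartite graph with
edge set `E`: each `succU u` is a strict linear order on the neighbors of `u`,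
and each `succV v` is a strict linear order on the neighbors of `v`. -/
def ValidPrefs {U V : Type*} (E : Finset (U × V)) (succU : U → V → V → Prop)
    (succV : V → U → U → Prop) : Prop :=
  (∀ u v, ¬ succU u v v) ∧
  (∀ u v₁ v₂ v₃, succU u v₁ v₂ → succU u v₂ v₃ → succU u v₁ v₃) ∧
  (∀ u v₁ v₂, (u, v₁) ∈ E → (u, v₂) ∈ E → v₁ ≠ v₂ → succU u v₁ v₂ ∨ succU u v₂ v₁) ∧
  (∀ v u, ¬ succV v u u) ∧
  (∀ v u₁ u₂ u₃, succV v u₁ u₂ → succV v u₂ u₃ → succV v u₁ u₃) ∧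
  (∀ v u₁ u₂, (u₁, v) ∈ E → (u₂, v) ∈ E → u₁ ≠ u₂ → succV v u₁ u₂ ∨ succV v u₂ u₁)

/-- The codomain `{ F(U') : U' ⊆ U }` of the map `F` induced by the stable
matching instance: the family of all sets of right vertices matched by a stable
matching of a restricted instance `(G, ≻)_{U' ∪ V}`.  (By the rural hospitals
theorem all stable matchings of a given restriction match the same set of
right vertices, so this is exactly the codomain of `F`.) -/
def stableFamily {U V : Type*} (E : Finset (U × V)) (succU : U → V → V → Prop)
    (succV : V → U → U → Prop) : Set (Finset V) :=
  {X | ∃ (U' : Finset U) (M : Finset (U × V)),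
    IsStable (restrictL E U') succU succV M ∧ X = M.image Prod.snd}

/-- auxiliary: a max element of a finset wrt an irreflexive transitive relation -/
lemma exists_rel_max {α : Type*} (r : α → α → Prop)
    (hirr : ∀ a, ¬ r a a) (htr : ∀ a b c, r a b → r b c → r a c)
    (s : Finset α) : s.Nonempty → ∃ a ∈ s, ∀ b ∈ s, ¬ r b a := by
  classical
  induction s using Finset.cons_induction_on with
  | empty => intro hs; exact absurd hs (by simp)
  | cons _ _ ha ih =>
    rename_i a t
    intro _
    rcases t.eq_empty_or_nonempty with rfl | ht
    · exact ⟨a, by simp, by simpa using hirr a⟩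
    · obtain ⟨m, hm, hmax⟩ := ih ht
      by_cases ham : r a m
      · refine ⟨a, Finset.mem_cons_self _ _, ?_⟩
        intro b hb hba
        rcases Finset.mem_cons.mp hb with rfl | hb
        · exact hirr _ hba
        · exact hmax b hb (htr b a m hba ham)
      · refine ⟨m, Finset.mem_cons_of_mem hm, ?_⟩
        intro b hb hbm
        rcases Finset.mem_cons.mp hb with rfl | hb
        · exact ham hbm
        · exact hmax b hb hbm

/-- potential function: total count of women each matched man would prefer -/
noncomputable def phiPot {U V : Type*} (E : Finset (U × V)) (succU : U → V → V → Prop)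
    (M : Finset (U × V)) : ℕ :=
  ∑ e ∈ M, (E.filter (fun f => f.1 = e.1 ∧ succU e.1 f.2 e.2)).card

lemma image_snd_erase {U V : Type*} (M : Finset (U × V))
    (hm : ∀ e₁ ∈ M, ∀ e₂ ∈ M, (e₁.1 = e₂.1 ∨ e₁.2 = e₂.2) → e₁ = e₂)
    (e : U × V) (he : e ∈ M) :
    (M.erase e).image Prod.snd = (M.image Prod.snd).erase e.2 := by
  ext v
  simp only [Finset.mem_image, Finset.mem_erase]
  constructor
  · rintro ⟨f, ⟨hne, hfM⟩, rfl⟩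
    exact ⟨fun h => hne (hm f hfM e he (Or.inr h)), f, hfM, rfl⟩
  · rintro ⟨hv, f, hfM, rfl⟩
    exact ⟨f, ⟨fun h => hv (by rw [h]), hfM⟩, rfl⟩

/-- Vacancy chain: given an "almost stable" matching on `restrictL E U''` where all
left vertices of `U''` are matched, exactly one woman `w ∈ X` is unfilled compared
to `X`, and no blocking pair avoids `w`, there is a genuinely stable matching on
`restrictL E U''` matching exactly `X` minus one woman. -/
lemma chain_step {U V : Type*}
    (E : Finset (U × V)) (succU : U → V → V → Prop) (succV : V → U → U → Prop)
    (hpref : ValidPrefs E succU succV)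
    (U'' : Finset U) (X : Finset V) :
    ∀ n : ℕ, ∀ (M : Finset (U × V)) (w : V),
      phiPot E succU M ≤ n →
      IsMatching (restrictL E U'') M →
      (∀ u ∈ U'', ∃ v, (u, v) ∈ M) →
      w ∈ X →
      M.image Prod.snd = X.erase w →
      (∀ u v, v ≠ w → ¬ IsBlocking (restrictL E U'') succU succV M u v) →
      ∃ w' ∈ X, ∃ M', IsStable (restrictL E U'') succU succV M' ∧
        M'.image Prod.snd = X.erase w' := by
  intro n
  induction n using Nat.strong_induction_on with
  | _ n ih =>
  intro M w hphi hmatch hall hwX himg hblock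
  obtain ⟨hUirr, hUtr, -, hVirr, hVtr, -⟩ := hpref
  have hMsub : M ⊆ restrictL E U'' := hmatch.1
  have hMU : ∀ e ∈ M, e.1 ∈ U'' := fun e he => (Finset.mem_filter.mp (hMsub he)).2
  have hwM : ∀ u, (u, w) ∉ M := by
    intro u hu
    have : w ∈ M.image Prod.snd := Finset.mem_image.mpr ⟨(u, w), hu, rfl⟩
    rw [himg] at this
    exact (Finset.notMem_erase w X) this
  set C : Finset (U × V) := M.filter (fun e => (e.1, w) ∈ E ∧ succU e.1 w e.2) with hCdef
  by_cases hC : C.Nonempty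
  · -- there is a candidate: rematch `w` with her best candidate
    obtain ⟨ustar, hustar, hmax⟩ := exists_rel_max (succV w) (hVirr w)
      (fun a b c => hVtr w a b c) (C.image Prod.fst) (hC.image _)
    obtain ⟨e₀, he₀C, he₀fst⟩ := Finset.mem_image.mp hustar
    obtain ⟨u₁, w'⟩ := e₀
    obtain rfl : u₁ = ustar := he₀fst
    have he₀M : (u₁, w') ∈ M := (Finset.mem_filter.mp he₀C).1
    have hedge : (u₁, w) ∈ E := (Finset.mem_filter.mp he₀C).2.1
    have hbetter : succU u₁ w w' := (Finset.mem_filter.mp he₀C).2.2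
    have hww' : w ≠ w' := by rintro rfl; exact hwM u₁ he₀M
    have hw'X : w' ∈ X := by
      have : w' ∈ M.image Prod.snd := Finset.mem_image.mpr ⟨_, he₀M, rfl⟩
      rw [himg] at this; exact Finset.mem_of_mem_erase this
    set M' : Finset (U × V) := insert (u₁, w) (M.erase (u₁, w')) with hM'def
    have hmemM' : ∀ e : U × V, e ∈ M' ↔ e = (u₁, w) ∨ (e ∈ M ∧ e ≠ (u₁, w')) := by
      intro e
      simp only [hM'def, Finset.mem_insert, Finset.mem_erase]
      tauto
    have hstarM' : (u₁, w) ∈ M' := Finset.mem_insert_self _ _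
    have hside : ∀ e ∈ M, e ≠ (u₁, w') → e.1 ≠ u₁ ∧ e.2 ≠ w := by
      intro e heM hne
      constructor
      · intro h; exact hne (hmatch.2 e heM (u₁, w') he₀M (Or.inl h))
      · intro h
        have he' : e = (e.1, w) := by rw [← h]
        exact hwM e.1 (he' ▸ heM)
    have hmatch' : IsMatching (restrictL E U'') M' := by
      constructor
      · intro e he
        rcases (hmemM' e).mp he with rfl | ⟨heM, -⟩
        · exact Finset.mem_filter.mpr ⟨hedge, hMU (u₁, w') he₀M⟩
        · exact hMsub heM
      · intro e₁ h₁ e₂ h₂ hsh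
        rcases (hmemM' e₁).mp h₁ with rfl | ⟨h₁M, h₁ne⟩ <;>
          rcases (hmemM' e₂).mp h₂ with h₂' | ⟨h₂M, h₂ne⟩
        · exact h₂'.symm
        · rcases hsh with h | h
          · exact absurd h.symm (hside e₂ h₂M h₂ne).1
          · exact absurd h.symm (hside e₂ h₂M h₂ne).2
        · rcases hsh with h | h
          · exact absurd (h.trans (congrArg Prod.fst h₂')) (hside e₁ h₁M h₁ne).1
          · exact absurd (h.trans (congrArg Prod.snd h₂')) (hside e₁ h₁M h₁ne).2
        · exact hmatch.2 e₁ h₁M e₂ h₂M hsh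
    have hall' : ∀ u ∈ U'', ∃ v, (u, v) ∈ M' := by
      intro u hu
      obtain ⟨v, hv⟩ := hall u hu
      by_cases he : (u, v) = (u₁, w')
      · have hu1 : u = u₁ := congrArg Prod.fst he
        exact ⟨w, by rw [hu1]; exact hstarM'⟩
      · exact ⟨v, (hmemM' _).mpr (Or.inr ⟨hv, he⟩)⟩
    have himg' : M'.image Prod.snd = X.erase w' := by
      have h1 : (M.erase (u₁, w')).image Prod.snd = (M.image Prod.snd).erase w' :=
        image_snd_erase M hmatch.2 (u₁, w') he₀M
      rw [hM'def, Finset.image_insert, h1, himg]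
      ext v
      simp only [Finset.mem_insert, Finset.mem_erase]
      constructor
      · rintro (rfl | ⟨hv1, hv2, hv3⟩)
        · exact ⟨hww', hwX⟩
        · exact ⟨hv1, hv3⟩
      · rintro ⟨hv1, hv2⟩
        by_cases hvw : v = w
        · exact Or.inl hvw
        · exact Or.inr ⟨hv1, hvw, hv2⟩
    have hblock' : ∀ u v, v ≠ w' → ¬ IsBlocking (restrictL E U'') succU succV M' u v := by
      intro u v hvw' hb
      obtain ⟨hEuv, hUc, hVc⟩ := hb
      have huU : u ∈ U'' := (Finset.mem_filter.mp hEuv).2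
      have huvE : (u, v) ∈ E := (Finset.mem_filter.mp hEuv).1
      obtain ⟨vu, hvu⟩ := hall' u huU
      obtain ⟨v'', hv''M', hpu⟩ : ∃ v'', (u, v'') ∈ M' ∧ succU u v v'' := by
        rcases hUc with h | h
        · exact absurd hvu (h vu)
        · exact h
      have hVtrans : v ≠ w →
          ((∀ u', (u', v) ∉ M) ∨ (∃ u', (u', v) ∈ M ∧ succV v u u')) := by
        intro hvw
        rcases hVc with h | ⟨u', hu'M', hs⟩
        · left
          intro u' hm
          exact h u' ((hmemM' _).mpr (Or.inr ⟨hm, by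
            rintro he
            exact hvw' (congrArg Prod.snd he)⟩))
        · right
          refine ⟨u', ?_, hs⟩
          rcases (hmemM' _).mp hu'M' with he | ⟨hm, -⟩
          · exact absurd (congrArg Prod.snd he) hvw
          · exact hm
      by_cases huu : u = u₁
      · have hveq : v'' = w := by
          have h2 := hmatch'.2 (u, v'') hv''M' (u₁, w) hstarM' (Or.inl huu)
          exact congrArg Prod.snd h2
        rw [hveq] at hpu
        by_cases hvw : v = w
        · exact hUirr u w (hvw ▸ hpu)
        · refine hblock u v hvw ⟨hEuv, Or.inr ⟨w', ?_, ?_⟩, hVtrans hvw⟩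
          · rw [huu]; exact he₀M
          · exact hUtr u v w w' hpu (by rw [huu]; exact hbetter)
      · have hv''M : (u, v'') ∈ M := by
          rcases (hmemM' _).mp hv''M' with he | ⟨hm, -⟩
          · exact absurd (congrArg Prod.fst he) huu
          · exact hm
        by_cases hvw : v = w
        · have hcand : (u, v'') ∈ C :=
            Finset.mem_filter.mpr ⟨hv''M, hvw ▸ huvE, hvw ▸ hpu⟩
          obtain ⟨u', hu'M', hs⟩ : ∃ u', (u', v) ∈ M' ∧ succV v u u' := by
            rcases hVc with h | h
            · exact absurd hstarM' (by rw [hvw] at h; exact h u₁)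
            · exact h
          have hueq : u' = u₁ := by
            have h2 := hmatch'.2 (u', v) hu'M' (u₁, w) hstarM' (Or.inr hvw)
            exact congrArg Prod.fst h2
          rw [hueq, hvw] at hs
          exact hmax u (Finset.mem_image.mpr ⟨(u, v''), hcand, rfl⟩) hs
        · exact hblock u v hvw ⟨hEuv, Or.inr ⟨v'', hv''M, hpu⟩, hVtrans hvw⟩
    -- the potential strictly decreases
    have hnotmem : (u₁, w) ∉ M.erase (u₁, w') := fun h => hwM u₁ (Finset.mem_of_mem_erase h)
    have hterm : (E.filter (fun f => f.1 = u₁ ∧ succU u₁ f.2 w)).card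
        < (E.filter (fun f => f.1 = u₁ ∧ succU u₁ f.2 w')).card := by
      apply Finset.card_lt_card
      rw [Finset.ssubset_iff_of_subset]
      · refine ⟨(u₁, w), Finset.mem_filter.mpr ⟨hedge, rfl, hbetter⟩, ?_⟩
        simp only [Finset.mem_filter]
        rintro ⟨-, -, h⟩
        exact hUirr u₁ w h
      · intro f hf
        obtain ⟨hfE, hf1, hf2⟩ := Finset.mem_filter.mp hf
        exact Finset.mem_filter.mpr ⟨hfE, hf1, hUtr _ _ _ _ hf2 hbetter⟩
    have hphiM : phiPot E succU M
        = phiPot E succU (M.erase (u₁, w'))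
          + (E.filter (fun f => f.1 = u₁ ∧ succU u₁ f.2 w')).card :=
      (Finset.sum_erase_add M _ he₀M).symm
    have hphiM' : phiPot E succU M'
        = (E.filter (fun f => f.1 = u₁ ∧ succU u₁ f.2 w)).card
          + phiPot E succU (M.erase (u₁, w')) :=
      Finset.sum_insert hnotmem
    have hlt : phiPot E succU M' < phiPot E succU M := by
      rw [hphiM, hphiM']; omega
    exact ih (phiPot E succU M') (lt_of_lt_of_le hlt hphi) M' w' le_rfl
      hmatch' hall' hw'X himg' hblock'
  · -- no candidate: `M` is already stable
    refine ⟨w, hwX, M, ⟨hmatch, ?_⟩, himg⟩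
    intro u v hb
    by_cases hvw : v = w
    · obtain ⟨hEuv, hUc, hVc⟩ := hb
      have huU : u ∈ U'' := (Finset.mem_filter.mp hEuv).2
      have huvE : (u, v) ∈ E := (Finset.mem_filter.mp hEuv).1
      obtain ⟨vu, hvu⟩ := hall u huU
      obtain ⟨v'', hv''M, hpu⟩ : ∃ v'', (u, v'') ∈ M ∧ succU u v v'' := by
        rcases hUc with h | h
        · exact absurd hvu (h vu)
        · exact h
      exact hC ⟨(u, v''), Finset.mem_filter.mpr ⟨hv''M, hvw ▸ huvE, hvw ▸ hpu⟩⟩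
    · exact hblock u v hvw hb

/-- The family `𝓕 = { F(U') : U' ⊆ U }` induced by a stable matching instance
is accessible: every nonempty `X ∈ 𝓕` contains `v` with `X ∖ {v} ∈ 𝓕`. -/
theorem stable_family_accessible {U V : Type*} [Fintype U] [Fintype V]
    (E : Finset (U × V)) (succU : U → V → V → Prop) (succV : V → U → U → Prop)
    (hpref : ValidPrefs E succU succV) :
    ∀ X ∈ stableFamily E succU succV, X ≠ ∅ →
      ∃ v ∈ X, X.erase v ∈ stableFamily E succU succV := by
  intro X hX hXne
  obtain ⟨U', M, ⟨hmatch, hnb⟩, rfl⟩ := hX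
  have hne : (M.image Prod.snd).Nonempty := Finset.nonempty_iff_ne_empty.mpr hXne
  obtain ⟨v0, hv0⟩ := hne
  obtain ⟨e0, he0M, he0snd⟩ := Finset.mem_image.mp hv0
  obtain ⟨u0, v0'⟩ := e0
  obtain rfl : v0' = v0 := he0snd
  set U'' : Finset U := (M.image Prod.fst).erase u0 with hU''
  have hsub0 : M.erase (u0, v0') ⊆ restrictL E U'' := by
    intro e he
    have heM : e ∈ M := Finset.mem_of_mem_erase he
    have heE : e ∈ E := (Finset.mem_filter.mp (hmatch.1 heM)).1
    refine Finset.mem_filter.mpr ⟨heE, Finset.mem_erase.mpr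
      ⟨?_, Finset.mem_image.mpr ⟨e, heM, rfl⟩⟩⟩
    intro h1
    exact (Finset.mem_erase.mp he).1 (hmatch.2 e heM (u0, v0') he0M (Or.inl h1))
  have hmatch0 : IsMatching (restrictL E U'') (M.erase (u0, v0')) :=
    ⟨hsub0, fun e₁ h₁ e₂ h₂ hsh =>
      hmatch.2 e₁ (Finset.mem_of_mem_erase h₁) e₂ (Finset.mem_of_mem_erase h₂) hsh⟩
  have hall0 : ∀ u ∈ U'', ∃ v, (u, v) ∈ M.erase (u0, v0') := by
    intro u hu
    obtain ⟨hu0, huim⟩ := Finset.mem_erase.mp hu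
    obtain ⟨e, heM, hefst⟩ := Finset.mem_image.mp huim
    obtain ⟨ue, ve⟩ := e
    obtain rfl : ue = u := hefst
    exact ⟨ve, Finset.mem_erase.mpr
      ⟨fun he => hu0 (congrArg Prod.fst he), heM⟩⟩
  have himg0 : (M.erase (u0, v0')).image Prod.snd = (M.image Prod.snd).erase v0' :=
    image_snd_erase M hmatch.2 (u0, v0') he0M
  have hUsub : restrictL E U'' ⊆ restrictL E U' := by
    intro e he
    obtain ⟨heE, heU⟩ := Finset.mem_filter.mp he
    obtain ⟨f, hfM, hffst⟩ := Finset.mem_image.mp (Finset.mem_of_mem_erase heU)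
    have hf : f ∈ restrictL E U' := hmatch.1 hfM
    exact Finset.mem_filter.mpr ⟨heE, hffst ▸ (Finset.mem_filter.mp hf).2⟩
  have hblock0 : ∀ u v, v ≠ v0' →
      ¬ IsBlocking (restrictL E U'') succU succV (M.erase (u0, v0')) u v := by
    intro u v hvv0 hb
    obtain ⟨hEuv, hUc, hVc⟩ := hb
    have huU : u ∈ U'' := (Finset.mem_filter.mp hEuv).2
    obtain ⟨vu, hvu⟩ := hall0 u huU
    obtain ⟨v'', hv''M0, hpu⟩ : ∃ v'', (u, v'') ∈ M.erase (u0, v0') ∧ succU u v v'' := by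
      rcases hUc with h | h
      · exact absurd hvu (h vu)
      · exact h
    apply hnb u v
    refine ⟨hUsub hEuv, Or.inr ⟨v'', Finset.mem_of_mem_erase hv''M0, hpu⟩, ?_⟩
    rcases hVc with h | ⟨u', hu'M0, hs⟩
    · left
      intro u' hm
      exact h u' (Finset.mem_erase.mpr ⟨fun he => hvv0 (congrArg Prod.snd he), hm⟩)
    · exact Or.inr ⟨u', Finset.mem_of_mem_erase hu'M0, hs⟩
  obtain ⟨w', hw'X, M', hstab', himg'⟩ := chain_step E succU succV hpref U''
    (M.image Prod.snd) (phiPot E succU (M.erase (u0, v0'))) (M.erase (u0, v0')) v0'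
    le_rfl hmatch0 hall0 hv0 himg0 hblock0
  exact ⟨w', hw'X, U'', M', hstab', himg'.symm⟩
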